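/- arXiv:2402.00383 — 2 statements merged into one kernel-verified Lean document; each statement's English description precedes it below -/
import Mathlib

section
/- Let A be a Schur ring over a group G, let f : F → F be any function with f(0)=0, and extend f coefficientwise to F[G] by f(Σ α_g g) = Σ f(α_g) g. Then f(α) ∈ A for every α ∈ A. -/
noncomputable def simpleQuantity (F : Type*) [Field F] {G : Type*} [Group G]
    (D : Finset G) : MonoidAlgebra F G :=
  ∑ g ∈ D, MonoidAlgebra.single g 1

structure SchurRing (F G : Type*) [Field F] [Group G] where
  parts : Set (Finset G)
  parts_nonempty : ∀ D ∈ parts, D.Nonempty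
  cover : ∀ g : G, ∃ D ∈ parts, g ∈ D
  eq_of_mem : ∀ D₁ ∈ parts, ∀ D₂ ∈ parts, ∀ g : G, g ∈ D₁ → g ∈ D₂ → D₁ = D₂
  one_mem : ({1} : Finset G) ∈ parts
  inv_mem : ∀ D ∈ parts, ∃ D' ∈ parts, ∀ g : G, g ∈ D' ↔ g⁻¹ ∈ D
  mul_mem : ∀ x ∈ Submodule.span F (simpleQuantity F '' parts),
    ∀ y ∈ Submodule.span F (simpleQuantity F '' parts),
    x * y ∈ Submodule.span F (simpleQuantity F '' parts)

noncomputable def SchurRing.span {F G : Type*} [Field F] [Group G] (A : SchurRing F G) :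
    Submodule F (MonoidAlgebra F G) :=
  Submodule.span F (simpleQuantity F '' A.parts)

def SchurRing.IsASet {F G : Type*} [Field F] [Group G] (A : SchurRing F G)
    (S : Set G) : Prop :=
  ∀ D ∈ A.parts, (∃ g ∈ D, g ∈ S) → ↑D ⊆ S

open scoped Classical in
lemma sq_apply {F : Type*} [Field F] {G : Type*} [Group G] (D : Finset G) (g : G) :
    (simpleQuantity F D).coeff g = if g ∈ D then 1 else 0 := by
  classical
  rw [simpleQuantity]
  rw [MonoidAlgebra.coeff_sum]; simp only [MonoidAlgebra.coeff_single]
  rw [Finsupp.finset_sum_apply, Finset.sum_congr rfl (fun x _ => Finsupp.single_apply)]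
  exact Finset.sum_ite_eq' D g (fun _ => 1)

/-- Coefficients constant on each part. -/
def SchurRing.Const {F G : Type*} [Field F] [Group G] (A : SchurRing F G)
    (α : MonoidAlgebra F G) : Prop :=
  ∀ D ∈ A.parts, ∀ g ∈ D, ∀ h ∈ D, α.coeff g = α.coeff h

lemma const_of_mem {F G : Type*} [Field F] [Group G] (A : SchurRing F G)
    (α : MonoidAlgebra F G) (hα : α ∈ A.span) : A.Const α := by
  classical
  refine Submodule.span_induction (p := fun x _ => A.Const x) ?_ ?_ ?_ ?_ hα
  · rintro x ⟨D', hD', rfl⟩ D hD g hg h hh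
    rw [sq_apply, sq_apply]
    by_cases hgD : g ∈ D'
    · have : D' = D := A.eq_of_mem D' hD' D hD g hgD hg
      subst this
      simp [hgD, hh]
    · have hhD : h ∉ D' := by
        intro hhD
        exact hgD (by rw [A.eq_of_mem D' hD' D hD h hhD hh]; exact hg)
      simp [hgD, hhD]
  · intro D hD g hg h hh; simp
  · intro x y _ _ hx hy D hD g hg h hh
    show (x + y).coeff g = (x + y).coeff h
    rw [MonoidAlgebra.coeff_add, Finsupp.add_apply, Finsupp.add_apply, hx D hD g hg h hh, hy D hD g hg h hh]
  · intro c x _ hx D hD g hg h hh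
    show (c • x).coeff g = (c • x).coeff h
    rw [MonoidAlgebra.coeff_smul, Finsupp.smul_apply, Finsupp.smul_apply, hx D hD g hg h hh]

lemma mem_of_const {F G : Type*} [Field F] [Group G] (A : SchurRing F G) :
    ∀ n (α : MonoidAlgebra F G), α.coeff.support.card = n → A.Const α → α ∈ A.span := by
  classical
  intro n
  induction n using Nat.strong_induction_on with
  | _ n ih =>
    intro α hcard hconst
    rcases eq_or_ne α 0 with rfl | hne
    · exact zero_mem _
    · obtain ⟨g, hg⟩ := Finsupp.support_nonempty_iff.mpr (MonoidAlgebra.coeff_eq_zero.not.mpr hne)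
      obtain ⟨D, hD, hgD⟩ := A.cover g
      set β := α - α.coeff g • simpleQuantity F D with hβ
      have hβval : ∀ x, β.coeff x = α.coeff x - (if x ∈ D then α.coeff g else 0) := by
        intro x
        rw [hβ, MonoidAlgebra.coeff_sub, Finsupp.sub_apply, MonoidAlgebra.coeff_smul, Finsupp.smul_apply, sq_apply]
        split <;> simp
      have hβsupp : β.coeff.support ⊆ α.coeff.support \ D := by
        intro x hx
        rw [Finsupp.mem_support_iff] at hx
        rw [hβval x] at hx
        by_cases hxD : x ∈ D
        · exfalso
          rw [if_pos hxD, hconst D hD x hxD g hgD, sub_self] at hx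
          exact hx rfl
        · simp only [if_neg hxD, sub_zero] at hx
          exact Finset.mem_sdiff.mpr ⟨Finsupp.mem_support_iff.mpr hx, hxD⟩
      have hlt : β.coeff.support.card < n := by
        have hss : α.coeff.support \ D ⊂ α.coeff.support := by
          refine Finset.ssubset_iff_of_subset (Finset.sdiff_subset) |>.mpr ?_
          exact ⟨g, hg, fun hmem => (Finset.mem_sdiff.mp hmem).2 hgD⟩
        calc β.coeff.support.card ≤ (α.coeff.support \ D).card := Finset.card_le_card hβsupp
          _ < α.coeff.support.card := Finset.card_lt_card hss
          _ = n := hcard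
      have hβconst : A.Const β := by
        intro D' hD' x hx y hy
        rw [hβval x, hβval y, hconst D' hD' x hx y hy]
        by_cases hxD : x ∈ D
        · have : D = D' := A.eq_of_mem D hD D' hD' x hxD hx
          subst this
          rw [if_pos hxD, if_pos hy]
        · have hyD : y ∉ D := by
            intro hyD
            exact hxD (by rw [A.eq_of_mem D hD D' hD' y hyD hy] at hxD ⊢; exact hx)
          rw [if_neg hxD, if_neg hyD]
      have hβmem : β ∈ A.span := ih _ hlt β rfl hβconst
      have : α = β + α.coeff g • simpleQuantity F D := by rw [hβ]; abel
      rw [this]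
      exact add_mem hβmem (Submodule.smul_mem _ _
        (Submodule.subset_span ⟨D, hD, rfl⟩))

/-- Coefficientwise application of any function `f : F → F` with `f 0 = 0`
preserves membership in a Schur ring. -/
theorem mapRange_mem {F G : Type*} [Field F] [CharZero F] [Group G]
    (A : SchurRing F G) (f : F → F) (hf : f 0 = 0)
    (α : MonoidAlgebra F G) (hα : α ∈ A.span) :
    MonoidAlgebra.ofCoeff (Finsupp.mapRange f hf α.coeff) ∈ A.span := by
  have hc := const_of_mem A α hα
  refine mem_of_const A _ (MonoidAlgebra.ofCoeff (Finsupp.mapRange f hf α.coeff)) rfl ?_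
  intro D hD g hg h hh
  rw [MonoidAlgebra.coeff_ofCoeff, Finsupp.mapRange_apply, Finsupp.mapRange_apply, hc D hD g hg h hh]
end

section
/- Let φ : G → H be a group homomorphism with kernel K, and A a Schur ring over G such that K is an A-subgroup. Then the image φ(A) is a Schur ring over φ(G), whose basic sets are exactly the images φ(C) for C ∈ 𝒟(A). -/
open scoped Classical

section Helpers

variable {F G H : Type*} [Field F] [Group G] [Group H]

lemma simpleQuantity_apply (D : Finset G) (g : G) :
    (simpleQuantity F D).coeff g = if g ∈ D then 1 else 0 := by
  classical
  rw [simpleQuantity, MonoidAlgebra.coeff_sum, Finsupp.finset_sum_apply]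
  simp [MonoidAlgebra.coeff_single, Finsupp.single_apply]

lemma sq_mem_span (A : SchurRing F G) {D : Finset G} (hD : D ∈ A.parts) :
    simpleQuantity F D ∈ A.span :=
  Submodule.subset_span ⟨D, hD, rfl⟩

noncomputable def SchurRing.partOf (A : SchurRing F G) (g : G) : Finset G :=
  (A.cover g).choose

lemma SchurRing.partOf_mem (A : SchurRing F G) (g : G) : A.partOf g ∈ A.parts :=
  (A.cover g).choose_spec.1

lemma SchurRing.mem_partOf (A : SchurRing F G) (g : G) : g ∈ A.partOf g :=
  (A.cover g).choose_spec.2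

lemma SchurRing.eq_partOf (A : SchurRing F G) {D : Finset G} (hD : D ∈ A.parts)
    {g : G} (hg : g ∈ D) : D = A.partOf g :=
  A.eq_of_mem D hD _ (A.partOf_mem g) g hg (A.mem_partOf g)

lemma apply_congr (A : SchurRing F G) {x : MonoidAlgebra F G} (hx : x ∈ A.span)
    {D : Finset G} (hD : D ∈ A.parts) {g₁ g₂ : G} (h₁ : g₁ ∈ D) (h₂ : g₂ ∈ D) :
    x.coeff g₁ = x.coeff g₂ := by
  induction hx using Submodule.span_induction with
  | mem z hz =>
    obtain ⟨E, hE, rfl⟩ := hz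
    rw [simpleQuantity_apply, simpleQuantity_apply]
    have : g₁ ∈ E ↔ g₂ ∈ E := by
      constructor
      · intro h
        have := A.eq_of_mem D hD E hE g₁ h₁ h
        exact this ▸ h₂
      · intro h
        have := A.eq_of_mem D hD E hE g₂ h₂ h
        exact this ▸ h₁
    simp [this]
  | zero => simp
  | add x y _ _ hx hy => rw [MonoidAlgebra.coeff_add, Finsupp.add_apply, Finsupp.add_apply, hx, hy]
  | smul a x _ hx => rw [MonoidAlgebra.coeff_smul, Finsupp.smul_apply, Finsupp.smul_apply, hx]

end Helpers

section Key

variable {F G H : Type*} [Field F] [CharZero F] [Group G] [Group H]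

lemma fiber_card_const (A : SchurRing F G) (φ : G →* H) (hker : A.IsASet ↑φ.ker)
    {C C' : Finset G} (hC : C ∈ A.parts) (hC' : C' ∈ A.parts)
    {g₁ g₂ : G} (h₁ : g₁ ∈ C') (h₂ : g₂ ∈ C') :
    (C.filter fun c => φ c = φ g₁).card = (C.filter fun c => φ c = φ g₂).card := by
  classical
  set P : Finset (Finset G) :=
    ((C' ×ˢ C).image fun p => A.partOf (p.1 * p.2⁻¹)).filter
      (fun D => ∀ d ∈ D, d ∈ φ.ker) with hPdef
  have hPparts : ∀ D ∈ P, D ∈ A.parts := by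
    intro D hD
    obtain ⟨p, -, rfl⟩ := Finset.mem_image.mp (Finset.mem_filter.mp hD).1
    exact A.partOf_mem _
  set x : MonoidAlgebra F G := ∑ D ∈ P, simpleQuantity F D with hxdef
  have hx : x ∈ A.span := Submodule.sum_mem _ fun D hD => sq_mem_span A (hPparts D hD)
  have hxC : x * simpleQuantity F C ∈ A.span :=
    A.mul_mem x hx _ (sq_mem_span A hC)
  -- key coefficient formula
  have coeff : ∀ g ∈ C',
      (x * simpleQuantity F C).coeff g = ((C.filter fun c => φ c = φ g).card : F) := by
    intro g hg
    have expand : x * simpleQuantity F C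
        = ∑ D ∈ P, ∑ c ∈ C, ∑ d ∈ D, MonoidAlgebra.single (d * c) (1 : F) := by
      rw [hxdef, Finset.sum_mul]
      refine Finset.sum_congr rfl fun D _ => ?_
      rw [simpleQuantity, simpleQuantity, Finset.sum_mul_sum]
      rw [Finset.sum_comm]
      simp [MonoidAlgebra.single_mul_single]
    rw [expand]
    rw [MonoidAlgebra.coeff_sum, Finsupp.finset_sum_apply]
    have inner : ∀ D ∈ P, (∑ c ∈ C, ∑ d ∈ D, MonoidAlgebra.single (d * c) (1:F)).coeff g
        = ∑ c ∈ C, if g * c⁻¹ ∈ D then (1:F) else 0 := by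
      intro D _
      rw [MonoidAlgebra.coeff_sum, Finsupp.finset_sum_apply]
      refine Finset.sum_congr rfl fun c _ => ?_
      rw [MonoidAlgebra.coeff_sum, Finsupp.finset_sum_apply]
      have : ∀ d ∈ D, (MonoidAlgebra.single (d * c) (1:F)).coeff g
          = if d = g * c⁻¹ then (1:F) else 0 := by
        intro d _
        rw [MonoidAlgebra.single_apply]
        congr 1
        simp [eq_comm, mul_inv_eq_iff_eq_mul, eq_iff_iff]
        constructor <;> intro h <;> simp [h]
      rw [Finset.sum_congr rfl this, Finset.sum_ite_eq' D (g * c⁻¹) (fun _ => (1:F))]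
    rw [Finset.sum_congr rfl inner, Finset.sum_comm]
    have unique : ∀ a : G, ∀ D₁ ∈ P, ∀ D₂ ∈ P, a ∈ D₁ → a ∈ D₂ → D₁ = D₂ := by
      intro a D₁ hD₁ D₂ hD₂ ha₁ ha₂
      exact A.eq_of_mem D₁ (hPparts D₁ hD₁) D₂ (hPparts D₂ hD₂) a ha₁ ha₂
    have inner2 : ∀ c ∈ C, (∑ D ∈ P, if g * c⁻¹ ∈ D then (1:F) else 0)
        = if φ c = φ g then (1:F) else 0 := by
      intro c hc
      have exiff : (∃ D ∈ P, g * c⁻¹ ∈ D) ↔ φ c = φ g := by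
        constructor
        · rintro ⟨D, hD, hmem⟩
          have := (Finset.mem_filter.mp hD).2 _ hmem
          have h1 : φ (g * c⁻¹) = 1 := this
          rw [map_mul, map_inv] at h1
          rw [eq_comm, ← mul_inv_eq_one]
          exact h1
        · intro hφ
          refine ⟨A.partOf (g * c⁻¹), ?_, A.mem_partOf _⟩
          rw [hPdef, Finset.mem_filter]
          constructor
          · exact Finset.mem_image.mpr ⟨(g, c), Finset.mem_product.mpr ⟨hg, hc⟩, rfl⟩
          · intro d hd
            have hk : g * c⁻¹ ∈ (↑φ.ker : Set G) := by
              simp only [SetLike.mem_coe, MonoidHom.mem_ker, map_mul, map_inv, hφ,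
                mul_inv_cancel]
            have := hker (A.partOf (g * c⁻¹)) (A.partOf_mem _)
              ⟨g * c⁻¹, A.mem_partOf _, hk⟩ hd
            exact this
      by_cases hex : ∃ D ∈ P, g * c⁻¹ ∈ D
      · obtain ⟨D₀, hD₀, hm₀⟩ := hex
        rw [if_pos (exiff.mp ⟨D₀, hD₀, hm₀⟩)]
        rw [Finset.sum_eq_single_of_mem D₀ hD₀
          (fun D hD hne => if_neg (fun h => hne (unique _ D hD D₀ hD₀ h hm₀)))]
        exact if_pos hm₀
      · rw [if_neg (fun h => hex (exiff.mpr h))]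
        refine Finset.sum_eq_zero fun D hD => ?_
        rw [if_neg (fun h => hex ⟨D, hD, h⟩)]
    rw [Finset.sum_congr rfl inner2, Finset.sum_boole]
  have := apply_congr A hxC hC' h₁ h₂
  rw [coeff g₁ h₁, coeff g₂ h₂] at this
  exact_mod_cast this

end Key


/-- If `φ : G → H` has kernel an `A`-subgroup, then the image of `A` under `φ`
is a Schur ring over `φ(G)`, with basic sets the images of the basic sets of `A`. -/
theorem quotient_schurRing {F G H : Type*} [Field F] [CharZero F] [Group G] [Group H]
    (φ : G →* H) (A : SchurRing F G) (hker : A.IsASet ↑φ.ker) :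
    ∃ B : SchurRing F ↥φ.range,
      B.parts = {D : Finset ↥φ.range |
        ∃ C ∈ A.parts, (↑D : Set ↥φ.range) = φ.rangeRestrict '' (↑C : Set G)} := by
  classical
  set ψ : G →* ↥φ.range := φ.rangeRestrict with hψdef
  have hψφ : ∀ a b : G, ψ a = ψ b ↔ φ a = φ b := by
    intro a b
    rw [Subtype.ext_iff]
    simp [hψdef]
  set Φ : MonoidAlgebra F G →ₐ[F] MonoidAlgebra F ↥φ.range :=
    MonoidAlgebra.mapDomainAlgHom F F ψ with hΦdef
  set Bp : Set (Finset ↥φ.range) :=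
    {D : Finset ↥φ.range |
      ∃ C ∈ A.parts, (↑D : Set ↥φ.range) = φ.rangeRestrict '' (↑C : Set G)} with hBpdef
  have hBp : ∀ C ∈ A.parts, (C.image ψ) ∈ Bp := by
    intro C hC
    exact ⟨C, hC, by simp [Finset.coe_image, hψdef]⟩
  have hBp' : ∀ D ∈ Bp, ∃ C ∈ A.parts, D = C.image ψ := by
    rintro D ⟨C, hC, hcoe⟩
    exact ⟨C, hC, Finset.coe_injective (by rw [hcoe, Finset.coe_image])⟩
  -- image inclusion claim
  have claim : ∀ C₁ ∈ A.parts, ∀ C₂ ∈ A.parts, ∀ a₁ ∈ C₁, ∀ a₂ ∈ C₂,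
      φ a₁ = φ a₂ → (ψ '' ↑C₂ : Set ↥φ.range) ⊆ ψ '' ↑C₁ := by
    rintro C₁ hC₁ C₂ hC₂ a₁ ha₁ a₂ ha₂ hφeq h ⟨c₂, hc₂, rfl⟩
    have hcard := fiber_card_const A φ hker hC₁ hC₂ ha₂ hc₂
    have hpos : 0 < (C₁.filter fun c => φ c = φ a₂).card :=
      Finset.card_pos.mpr ⟨a₁, Finset.mem_filter.mpr ⟨ha₁, hφeq⟩⟩
    rw [hcard] at hpos
    obtain ⟨c₁, hc₁⟩ := Finset.card_pos.mp hpos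
    obtain ⟨hc₁C, hc₁φ⟩ := Finset.mem_filter.mp hc₁
    exact ⟨c₁, hc₁C, (hψφ c₁ c₂).mpr hc₁φ⟩
  -- the main computation : Φ maps simple quantities to multiples of simple quantities
  have main : ∀ C ∈ A.parts, ∃ m : ℕ, 0 < m ∧
      Φ (simpleQuantity F C) = (m : F) • simpleQuantity F (C.image ψ) := by
    intro C hC
    obtain ⟨g₀, hg₀⟩ := A.parts_nonempty C hC
    refine ⟨(C.filter fun c => φ c = φ g₀).card,
      Finset.card_pos.mpr ⟨g₀, Finset.mem_filter.mpr ⟨hg₀, rfl⟩⟩, ?_⟩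
    have h1 : Φ (simpleQuantity F C) = ∑ g ∈ C, MonoidAlgebra.single (ψ g) (1 : F) := by
      rw [simpleQuantity, map_sum]
      simp [hΦdef, MonoidAlgebra.mapDomain_single]
    rw [h1, Finset.sum_comp (fun h => MonoidAlgebra.single h (1 : F)) ψ]
    have h2 : ∀ h ∈ C.image ψ,
        (C.filter fun a => ψ a = h).card = (C.filter fun c => φ c = φ g₀).card := by
      intro h hh
      obtain ⟨g₁, hg₁, rfl⟩ := Finset.mem_image.mp hh
      have : (C.filter fun a => ψ a = ψ g₁) = (C.filter fun c => φ c = φ g₁) := by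
        apply Finset.filter_congr
        intro a _
        simp [hψφ a g₁]
      rw [this]
      exact fiber_card_const A φ hker hC hC hg₁ hg₀
    rw [Finset.sum_congr rfl fun h hh => by rw [h2 h hh]]
    rw [simpleQuantity, Finset.smul_sum]
    refine Finset.sum_congr rfl fun h _ => ?_
    rw [Nat.cast_smul_eq_nsmul]
  -- span equality
  have hspan : Submodule.span F (simpleQuantity F '' Bp)
      = Submodule.map Φ.toLinearMap A.span := by
    apply le_antisymm
    · rw [Submodule.span_le]
      rintro _ ⟨D, hD, rfl⟩
      obtain ⟨C, hC, rfl⟩ := hBp' D hD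
      obtain ⟨m, hm, heq⟩ := main C hC
      have hne : ((m : F)) ≠ 0 := by exact_mod_cast hm.ne'
      have : simpleQuantity F (C.image ψ) = (m : F)⁻¹ • Φ (simpleQuantity F C) := by
        rw [heq, smul_smul, inv_mul_cancel₀ hne, one_smul]
      rw [SetLike.mem_coe, this]
      exact Submodule.smul_mem _ _ ⟨_, sq_mem_span A hC, rfl⟩
    · rw [SchurRing.span, Submodule.map_span, Submodule.span_le]
      rintro _ ⟨_, ⟨C, hC, rfl⟩, rfl⟩
      obtain ⟨m, hm, heq⟩ := main C hC
      rw [SetLike.mem_coe]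
      show Φ (simpleQuantity F C) ∈ _
      rw [heq]
      exact Submodule.smul_mem _ _
        (Submodule.subset_span ⟨C.image ψ, hBp C hC, rfl⟩)
  refine ⟨⟨Bp, ?_, ?_, ?_, ?_, ?_, ?_⟩, rfl⟩
  · -- nonempty
    intro D hD
    obtain ⟨C, hC, rfl⟩ := hBp' D hD
    exact (A.parts_nonempty C hC).image ψ
  · -- cover
    intro h
    obtain ⟨g, rfl⟩ := φ.rangeRestrict_surjective h
    exact ⟨(A.partOf g).image ψ, hBp _ (A.partOf_mem g),
      Finset.mem_image.mpr ⟨g, A.mem_partOf g, rfl⟩⟩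
  · -- eq_of_mem
    intro D₁ hD₁ D₂ hD₂ h hh₁ hh₂
    obtain ⟨C₁, hC₁, rfl⟩ := hBp' D₁ hD₁
    obtain ⟨C₂, hC₂, rfl⟩ := hBp' D₂ hD₂
    obtain ⟨a₁, ha₁, hψa₁⟩ := Finset.mem_image.mp hh₁
    obtain ⟨a₂, ha₂, hψa₂⟩ := Finset.mem_image.mp hh₂
    have hφeq : φ a₁ = φ a₂ := (hψφ a₁ a₂).mp (by rw [hψa₁, hψa₂])
    apply Finset.coe_injective
    rw [Finset.coe_image, Finset.coe_image]
    exact le_antisymm (claim C₂ hC₂ C₁ hC₁ a₂ ha₂ a₁ ha₁ hφeq.symm)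
      (claim C₁ hC₁ C₂ hC₂ a₁ ha₁ a₂ ha₂ hφeq)
  · -- one_mem
    refine ⟨{1}, A.one_mem, ?_⟩
    simp
  · -- inv_mem
    intro D hD
    obtain ⟨C, hC, rfl⟩ := hBp' D hD
    obtain ⟨C', hC', hinv⟩ := A.inv_mem C hC
    refine ⟨C'.image ψ, hBp C' hC', fun h => ?_⟩
    constructor
    · intro hmem
      obtain ⟨g, hg, rfl⟩ := Finset.mem_image.mp hmem
      exact Finset.mem_image.mpr ⟨g⁻¹, (hinv g).mp hg, by rw [map_inv]⟩
    · intro hmem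
      obtain ⟨g, hg, hψg⟩ := Finset.mem_image.mp hmem
      refine Finset.mem_image.mpr ⟨g⁻¹, (hinv g⁻¹).mpr (by simpa using hg), ?_⟩
      rw [map_inv, hψg, inv_inv]
  · -- mul_mem
    intro x hx y hy
    rw [show Submodule.span F (simpleQuantity F '' Bp)
        = Submodule.map Φ.toLinearMap A.span from hspan] at hx hy ⊢
    obtain ⟨x', hx', rfl⟩ := hx
    obtain ⟨y', hy', rfl⟩ := hy
    exact ⟨x' * y', A.mul_mem x' hx' y' hy', map_mul Φ x' y'⟩
end
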